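/- Let u ∈ V and let (u_h, z_h) ∈ V_h × W_h satisfy the consistent discrete system: a_h(u_h, w) − s_W(z_h, w) = a_h(u, w) for all w ∈ W_h, and a_h(v, z_h) + s_V(u_h, v) = s_V(u, v) for all v ∈ V_h. Let i_V u ∈ V_h be given and set ρ := |(u − i_V u, 0)|_L. Assume: (inf-sup stability) there is c_s > 0 such that for every (ν, ζ) ∈ V_h × W_h there exists (v, w) ∈ V_h × W_h with |(v, w)|_L ≤ 1 and c_s·|(ν, ζ)|_L ≤ A_h[(ν, ζ), (v, w)]; (continuity) there is δ ≥ 0 such that a_h(u − i_V u, w) ≤ δ·|(0, w)|_L for all w ∈ W_h; (domination) there is C₁ ≥ 0 with |u − i_V u|_{s_V} ≤ C₁·ρ and |v|_{s_V} ≤ C₁·|(v, w)|_L for all (v, w) ∈ V_h × W_h. Then |(u_h − u, z_h)|_L ≤ ρ + c_s^{-1}·(δ + C₁²·ρ). In particular, if δ + ρ ≤ C_V·h^t for constants C_V ≥ 0, h > 0 and t ≥ 1, then |(u_h − u, z_h)|_L ≤ max(1, C₁²)·(1 + c_s^{-1})·C_V·h^t. -/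

import Mathlib

private lemma bilin_cauchy_schwarz {V : Type*} [AddCommGroup V] [Module ℝ V]
    (B : V →ₗ[ℝ] V →ₗ[ℝ] ℝ) (hsym : ∀ a b, B a b = B b a)
    (hpos : ∀ a, 0 ≤ B a a) (a b : V) :
    B a b ≤ Real.sqrt (B a a) * Real.sqrt (B b b) := by
  have key : (B a b) ^ 2 ≤ B a a * B b b := by
    have h' : ∀ t : ℝ, 0 ≤ (B b b) * (t * t) + (2 * B a b) * t + B a a := by
      intro t
      have h := hpos (a + t • b)
      simp only [map_add, map_smul, LinearMap.add_apply, LinearMap.smul_apply,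
        smul_eq_mul] at h
      rw [hsym b a] at h
      linarith [h]
    have hd := discrim_le_zero h'
    unfold discrim at hd
    nlinarith
  calc B a b ≤ |B a b| := le_abs_self _
    _ = Real.sqrt ((B a b) ^ 2) := (Real.sqrt_sq_eq_abs _).symm
    _ ≤ Real.sqrt (B a a * B b b) := Real.sqrt_le_sqrt key
    _ = Real.sqrt (B a a) * Real.sqrt (B b b) := Real.sqrt_mul (hpos a) _

/-- Stabilisation-norm convergence (Lemma 1 of the paper, abstract form):
under consistency, inf-sup stability, continuity and domination hypotheses,
the error in the stabilisation seminorm is bounded by `ρ + cs⁻¹ (δ + C₁² ρ)`,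
and in particular by `max 1 C₁² (1 + cs⁻¹) C_V h^t` under approximability. -/
theorem stabilisation_norm_convergence
    {V W : Type*} [NormedAddCommGroup V] [NormedSpace ℝ V]
    [NormedAddCommGroup W] [NormedSpace ℝ W]
    (Vh : Submodule ℝ V) (Wh : Submodule ℝ W)
    (ah : V →ₗ[ℝ] W →ₗ[ℝ] ℝ)
    (sV : V →ₗ[ℝ] V →ₗ[ℝ] ℝ) (sW : W →ₗ[ℝ] W →ₗ[ℝ] ℝ)
    (hsVsymm : ∀ v₁ v₂ : V, sV v₁ v₂ = sV v₂ v₁)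
    (hsVpos : ∀ v : V, 0 ≤ sV v v)
    (hsWsymm : ∀ w₁ w₂ : W, sW w₁ w₂ = sW w₂ w₁)
    (hsWpos : ∀ w : W, 0 ≤ sW w w)
    (L : Seminorm ℝ (V × W))
    (hL₁ : ∀ (v : V) (w : W), L (v, (0 : W)) ≤ L (v, w))
    (hL₂ : ∀ (v : V) (w : W), L ((0 : V), w) ≤ L (v, w))
    (u : V) (uh : V) (zh : W) (huh : uh ∈ Vh) (hzh : zh ∈ Wh)
    -- the consistent discrete system
    (heq1 : ∀ w ∈ Wh, ah uh w - sW zh w = ah u w)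
    (heq2 : ∀ v ∈ Vh, ah v zh + sV uh v = sV u v)
    (iVu : V) (hiVu : iVu ∈ Vh)
    (ρ : ℝ) (hρ : ρ = L (u - iVu, (0 : W)))
    -- inf-sup stability
    (cs : ℝ) (hcs : 0 < cs)
    (hinfsup : ∀ ν ∈ Vh, ∀ ζ ∈ Wh, ∃ v ∈ Vh, ∃ w ∈ Wh,
      L (v, w) ≤ 1 ∧ cs * L (ν, ζ) ≤ ah ν w - sW ζ w + ah v ζ + sV ν v)
    -- continuity
    (δ : ℝ) (hδ : 0 ≤ δ)
    (hcont : ∀ w ∈ Wh, ah (u - iVu) w ≤ δ * L ((0 : V), w))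
    -- domination
    (C₁ : ℝ) (hC₁ : 0 ≤ C₁)
    (hdom1 : Real.sqrt (sV (u - iVu) (u - iVu)) ≤ C₁ * ρ)
    (hdom2 : ∀ v ∈ Vh, ∀ w ∈ Wh, Real.sqrt (sV v v) ≤ C₁ * L (v, w)) :
    L (uh - u, zh) ≤ ρ + cs⁻¹ * (δ + C₁ ^ 2 * ρ) ∧
      ∀ CV h t : ℝ, 0 ≤ CV → 0 < h → 1 ≤ t → δ + ρ ≤ CV * h ^ t →
        L (uh - u, zh) ≤ max 1 (C₁ ^ 2) * (1 + cs⁻¹) * CV * h ^ t := by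
  have hρ0 : 0 ≤ ρ := hρ ▸ apply_nonneg L _
  obtain ⟨v, hv, w, hw, hL1, hkey⟩ := hinfsup (uh - iVu) (Vh.sub_mem huh hiVu) zh hzh
  have h1 : ah (uh - iVu) w - sW zh w = ah (u - iVu) w := by
    have := heq1 w hw
    simp only [map_sub, LinearMap.sub_apply] at *
    linarith
  have h2 : ah v zh + sV (uh - iVu) v = sV (u - iVu) v := by
    have := heq2 v hv
    simp only [map_sub, LinearMap.sub_apply] at *
    linarith
  have hch : ah (u - iVu) w ≤ δ * L ((0 : V), w) := hcont w hw
  have hcsv : sV (u - iVu) v ≤ (C₁ * ρ) * (C₁ * L (v, w)) := by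
    calc sV (u - iVu) v
        ≤ Real.sqrt (sV (u - iVu) (u - iVu)) * Real.sqrt (sV v v) :=
          bilin_cauchy_schwarz sV hsVsymm hsVpos _ _
      _ ≤ (C₁ * ρ) * (C₁ * L (v, w)) :=
          mul_le_mul hdom1 (hdom2 v hv w hw) (Real.sqrt_nonneg _)
            (by positivity)
  have hLw : L ((0 : V), w) ≤ 1 := le_trans (hL₂ v w) hL1
  have hE : cs * L (uh - iVu, zh) ≤ δ + C₁ ^ 2 * ρ := by
    nlinarith [apply_nonneg L ((0 : V), w), apply_nonneg L (v, w),
      mul_nonneg (mul_nonneg hC₁ hC₁) hρ0]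
  have hEL : L (uh - iVu, zh) ≤ cs⁻¹ * (δ + C₁ ^ 2 * ρ) := by
    rw [← mul_le_mul_iff_right₀ hcs, ← mul_assoc, mul_inv_cancel₀ hcs.ne', one_mul]
    exact hE
  have htri : L (uh - u, zh) ≤ L (uh - iVu, zh) + ρ := by
    have heq : (uh - u, zh) = ((uh - iVu, zh) : V × W) + (iVu - u, 0) := by
      simp [Prod.ext_iff]
    have hneg : L ((iVu - u, (0 : W))) = ρ := by
      rw [show ((iVu - u, (0 : W))) = -((u - iVu, (0 : W))) by
        simp [Prod.ext_iff], map_neg_eq_map, hρ]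
    calc L (uh - u, zh) = L (((uh - iVu, zh) : V × W) + (iVu - u, 0)) := by rw [heq]
      _ ≤ L (uh - iVu, zh) + L ((iVu - u, (0 : W))) := map_add_le_add L _ _
      _ = L (uh - iVu, zh) + ρ := by rw [hneg]
  have part1 : L (uh - u, zh) ≤ ρ + cs⁻¹ * (δ + C₁ ^ 2 * ρ) := by linarith
  refine ⟨part1, ?_⟩
  intro CV h t hCV hh ht happ
  have hX : (0 : ℝ) ≤ CV * h ^ t := by positivity
  have hics : (0 : ℝ) ≤ cs⁻¹ := by positivity
  have hM1 : (1 : ℝ) ≤ max 1 (C₁ ^ 2) := le_max_left _ _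
  have hM2 : C₁ ^ 2 ≤ max 1 (C₁ ^ 2) := le_max_right _ _
  calc L (uh - u, zh) ≤ ρ + cs⁻¹ * (δ + C₁ ^ 2 * ρ) := part1
    _ ≤ max 1 (C₁ ^ 2) * (1 + cs⁻¹) * CV * h ^ t := by
        nlinarith [mul_le_mul_of_nonneg_left happ hics,
          mul_nonneg hics hρ0, mul_nonneg hics hδ]
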